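/- For every profile of the stable marriage problem (n men, n women, each with a strict linear order over the other gender) there exists a stable matching, i.e., a bijection between men and women with no blocking pair. -/

import Mathlib

open Equiv

/-- A strict linear order over `Fin n`, encoded as the bijection sending each
position (position `0` = most preferred) to the element occupying that position. -/
abbrev Pref (n : ℕ) := Equiv.Perm (Fin n)

/-- `prefers r a b` : the order `r` strictly prefers `a` to `b`. -/
def prefers {n : ℕ} (r : Pref n) (a b : Fin n) : Prop := r.symm a < r.symm b

/-- `weaklyPrefers r a b` : the order `r` weakly prefers `a` to `b`. -/
def weaklyPrefers {n : ℕ} (r : Pref n) (a b : Fin n) : Prop := r.symm a ≤ r.symm b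

/-- A profile of the stable marriage problem with `n` men and `n` women:
each man has a strict linear order over the women and vice versa. -/
structure Profile (n : ℕ) where
  menPref : Fin n → Pref n
  womenPref : Fin n → Pref n

/-- A matching is a bijection from the men to the women. -/
abbrev Matching (n : ℕ) := Equiv.Perm (Fin n)

/-- `m` and `w` form a blocking pair for `μ`. -/
def IsBlockingPair {n : ℕ} (p : Profile n) (μ : Matching n) (m w : Fin n) : Prop :=
  μ m ≠ w ∧ prefers (p.menPref m) w (μ m) ∧ prefers (p.womenPref w) m (μ.symm w)

/-- A matching is stable when it admits no blocking pair. -/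
def IsStable {n : ℕ} (p : Profile n) (μ : Matching n) : Prop :=
  ∀ m w, ¬ IsBlockingPair p μ m w

/-- A stable matching in which every man is matched to his best stable partner. -/
def ManOptimal {n : ℕ} (p : Profile n) (μs : Matching n) : Prop :=
  IsStable p μs ∧ ∀ μ, IsStable p μ → ∀ m, weaklyPrefers (p.menPref m) (μs m) (μ m)

/-- A stable matching in which every woman is matched to her best stable partner. -/
def WomanOptimal {n : ℕ} (p : Profile n) (μs : Matching n) : Prop :=
  IsStable p μs ∧ ∀ μ, IsStable p μ → ∀ w, weaklyPrefers (p.womenPref w) (μs.symm w) (μ.symm w)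

/-- The gender-swapped profile. -/
def swapProfile {n : ℕ} (p : Profile n) : Profile n := ⟨p.womenPref, p.menPref⟩

/-- The rank list of a strict linear order: elements in decreasing order of preference. -/
def rankList {n : ℕ} (r : Pref n) : List (Fin n) := List.ofFn r

/-- The candidate signature vector of the family `L` after reindexing by `π`
and relabeling the alternatives by `ρ`. -/
def sigCandidate {n : ℕ} (L : Fin n → Pref n) (π ρ : Equiv.Perm (Fin n)) : List (Fin n) :=
  (List.ofFn (fun i => rankList ((L (π i)).trans ρ))).flatten

/-- The signature of a family of strict linear orders: the lexicographically least
concatenation of rank lists over all reindexings and relabelings. -/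
def signature {n : ℕ} (L : Fin n → Pref n) : List (Fin n) :=
  ((Finset.univ : Finset (Equiv.Perm (Fin n) × Equiv.Perm (Fin n))).image
      (fun q => sigCandidate L q.1 q.2)).min'
    (Finset.Nonempty.image ⟨(1, 1), Finset.mem_univ _⟩ _)


section GaleShapley

variable {n : ℕ}

/-- The current proposal of man `m` given the pointer vector `c`. -/
def gsProp (p : Profile n) (c : Fin n → Fin n) (m : Fin n) : Fin n := p.menPref m (c m)

/-- The Gale–Shapley invariant: every woman who has rejected a man currently
holds a proposer she strictly prefers to him. -/
def GSInv (p : Profile n) (c : Fin n → Fin n) : Prop :=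
  ∀ m k : Fin n, k < c m →
    ∃ m', gsProp p c m' = p.menPref m k ∧
      (p.womenPref (p.menPref m k)).symm m' < (p.womenPref (p.menPref m k)).symm m

lemma gs_step (p : Profile n) (c : Fin n → Fin n) (hI : GSInv p c)
    (m1 m2 : Fin n) (hne : m1 ≠ m2) (hpp : gsProp p c m1 = gsProp p c m2)
    (hrank : (p.womenPref (gsProp p c m2)).symm m1 < (p.womenPref (gsProp p c m2)).symm m2) :
    ∃ c' : Fin n → Fin n, GSInv p c' ∧ (∑ m, (c m).val) < ∑ m, (c' m).val := by
  -- the rejected man m2 has not exhausted his list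
  have hlt : (c m2).val + 1 < n := by
    by_contra hge
    push_neg at hge
    have hcm2 : (c m2).val = n - 1 := by have := (c m2).isLt; omega
    -- injection from women-ranks of m2 to men ≠ m2
    set g : Fin n → Fin n := fun k =>
      if hk : k < c m2 then (hI m2 k hk).choose else m1 with hg
    have hgA : ∀ k, gsProp p c (g k) = p.menPref m2 k := by
      intro k
      by_cases hk : k < c m2
      · simp only [hg, dif_pos hk]
        exact (hI m2 k hk).choose_spec.1
      · have hke : k = c m2 := by
          apply Fin.ext
          have := k.isLt
          have h2 : ¬ (k.val < (c m2).val) := hk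
          omega
        simp only [hg, dif_neg hk]
        rw [hpp, hke]
        rfl
    have hgB : ∀ k, g k ≠ m2 := by
      intro k
      by_cases hk : k < c m2
      · simp only [hg, dif_pos hk]
        intro h
        have := (hI m2 k hk).choose_spec.2
        rw [h] at this
        exact lt_irrefl _ this
      · simp only [hg, dif_neg hk]
        exact hne
    have hginj : Function.Injective g := by
      intro k1 k2 hk
      have : p.menPref m2 k1 = p.menPref m2 k2 := by
        rw [← hgA k1, ← hgA k2, hk]
      exact (p.menPref m2).injective this
    obtain ⟨k, hk⟩ := (Finite.injective_iff_surjective.mp hginj) m2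
    exact hgB k hk
  set v : Fin n := ⟨(c m2).val + 1, hlt⟩ with hv
  refine ⟨Function.update c m2 v, ?_, ?_⟩
  · -- invariant preservation
    have hprop_ne : ∀ m' : Fin n, m' ≠ m2 →
        gsProp p (Function.update c m2 v) m' = gsProp p c m' := by
      intro m' hm'
      simp [gsProp, Function.update_of_ne hm']
    -- upgrading an old witness
    have key : ∀ m k : Fin n,
        (∃ m', gsProp p c m' = p.menPref m k ∧
          (p.womenPref (p.menPref m k)).symm m' < (p.womenPref (p.menPref m k)).symm m) →
        ∃ m', gsProp p (Function.update c m2 v) m' = p.menPref m k ∧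
          (p.womenPref (p.menPref m k)).symm m' < (p.womenPref (p.menPref m k)).symm m := by
      intro m k ⟨m', h1, h2⟩
      by_cases hm' : m' = m2
      · subst hm'
        refine ⟨m1, ?_, ?_⟩
        · rw [hprop_ne m1 hne, hpp, h1]
        · rw [← h1]
          exact lt_trans hrank (by rw [h1]; exact h2)
      · exact ⟨m', by rw [hprop_ne m' hm']; exact h1, h2⟩
    intro m k hk
    by_cases hm : m = m2
    · subst hm
      rw [Function.update_self] at hk
      have hor : k < c m ∨ k = c m := by
        have hk' : k.val < (c m).val + 1 := hk
        rcases lt_or_eq_of_le (Nat.lt_succ_iff.mp hk') with h | h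
        · left; exact h
        · right; exact Fin.ext h
      rcases hor with h | h
      · exact key m k (hI m k h)
      · subst h
        refine ⟨m1, ?_, ?_⟩
        · rw [hprop_ne m1 hne, hpp]; rfl
        · exact hrank
    · rw [Function.update_of_ne hm] at hk
      exact key m k (hI m k hk)
  · -- the sum strictly increases
    have h1 : ∀ j, (Function.update c m2 v j).val =
        Function.update (fun i => (c i).val) m2 v.val j :=
      fun j => Function.apply_update (fun _ x => Fin.val x) c m2 v j
    simp only [h1]
    rw [Finset.sum_update_of_mem (Finset.mem_univ m2),
      Finset.sdiff_singleton_eq_erase]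
    have h2 : (∑ m, (c m).val) =
        (c m2).val + ∑ m ∈ Finset.univ.erase m2, (c m).val :=
      (Finset.add_sum_erase _ _ (Finset.mem_univ m2)).symm
    have h3 : v.val = (c m2).val + 1 := rfl
    omega

lemma gs_reach (p : Profile n) : ∀ (N : ℕ) (c : Fin n → Fin n), GSInv p c →
    n * n - (∑ m, (c m).val) ≤ N →
    ∃ c', GSInv p c' ∧ Function.Injective (gsProp p c') := by
  intro N
  induction N with
  | zero =>
    intro c hI hle
    by_cases hinj : Function.Injective (gsProp p c)
    · exact ⟨c, hI, hinj⟩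
    · exfalso
      rw [Function.not_injective_iff] at hinj
      obtain ⟨m1, m2, hpp, hne⟩ := hinj
      have hd : (p.womenPref (gsProp p c m2)).symm m1 ≠ (p.womenPref (gsProp p c m2)).symm m2 :=
        fun h => hne ((p.womenPref (gsProp p c m2)).symm.injective h)
      obtain ⟨c', hI', hsum⟩ :
          ∃ c' : Fin n → Fin n, GSInv p c' ∧ (∑ m, (c m).val) < ∑ m, (c' m).val := by
        rcases lt_or_gt_of_ne hd with h | h
        · exact gs_step p c hI m1 m2 hne hpp h
        · exact gs_step p c hI m2 m1 hne.symm hpp.symm (by rw [hpp]; exact h)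
      have hb : (∑ m, (c' m).val) ≤ n * n := by
        calc (∑ m, (c' m).val) ≤ ∑ _m : Fin n, n := Finset.sum_le_sum (fun i _ => (c' i).isLt.le)
          _ = n * n := by simp [Finset.sum_const, Finset.card_univ, mul_comm]
      omega
  | succ N ih =>
    intro c hI hle
    by_cases hinj : Function.Injective (gsProp p c)
    · exact ⟨c, hI, hinj⟩
    · rw [Function.not_injective_iff] at hinj
      obtain ⟨m1, m2, hpp, hne⟩ := hinj
      have hd : (p.womenPref (gsProp p c m2)).symm m1 ≠ (p.womenPref (gsProp p c m2)).symm m2 :=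
        fun h => hne ((p.womenPref (gsProp p c m2)).symm.injective h)
      obtain ⟨c', hI', hsum⟩ :
          ∃ c' : Fin n → Fin n, GSInv p c' ∧ (∑ m, (c m).val) < ∑ m, (c' m).val := by
        rcases lt_or_gt_of_ne hd with h | h
        · exact gs_step p c hI m1 m2 hne hpp h
        · exact gs_step p c hI m2 m1 hne.symm hpp.symm (by rw [hpp]; exact h)
      have hb : (∑ m, (c' m).val) ≤ n * n := by
        calc (∑ m, (c' m).val) ≤ ∑ _m : Fin n, n := Finset.sum_le_sum (fun i _ => (c' i).isLt.le)
          _ = n * n := by simp [Finset.sum_const, Finset.card_univ, mul_comm]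
      exact ih c' hI' (by omega)

end GaleShapley

/-- For every profile of the stable marriage problem there exists a stable matching. -/
theorem stable_matching_exists (n : ℕ) (hn : 1 ≤ n) (p : Profile n) :
    ∃ μ : Matching n, IsStable p μ := by
  obtain ⟨c, hI, hinj⟩ := gs_reach p (n * n) (fun _ => ⟨0, hn⟩) (fun m k hk => absurd hk (by simp [Fin.lt_def])) (by simp)
  have hbij : Function.Bijective (gsProp p c) := Finite.injective_iff_bijective.mp hinj
  refine ⟨Equiv.ofBijective _ hbij, ?_⟩
  rintro m w ⟨hne, hpref, hwpref⟩
  have hmu : (Equiv.ofBijective _ hbij) m = gsProp p c m := rfl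
  rw [hmu] at hne hpref
  -- w rejected m at some rank k < c m
  have hk : (p.menPref m).symm w < c m := by
    have : (p.menPref m).symm (gsProp p c m) = c m := by
      simp [gsProp]
    rw [prefers, this] at hpref
    exact hpref
  have hw : p.menPref m ((p.menPref m).symm w) = w := (p.menPref m).apply_symm_apply w
  obtain ⟨m', h1, h2⟩ := hI m ((p.menPref m).symm w) hk
  rw [hw] at h1 h2
  have hm' : (Equiv.ofBijective _ hbij).symm w = m' := by
    apply (Equiv.symm_apply_eq _).mpr
    exact h1.symm
  rw [prefers, hm'] at hwpref
  exact lt_asymm h2 hwpref
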